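/- Let M(α) be the 3×3 matrix with rows [1 − αnσμ, αL√n φ, α], [αL√n φ, c + αL√n φ, α], [αL²r√n φ, Lr(1+c)φ + αL²r√n φ, τ + αLr], where c, τ ∈ (0,1) and σ, μ, L, r, φ, n > 0. If α > 0 satisfies α ≤ min{(1−c)/(L√n φ), (1−τ)/(Lr), nσμ(1−τ)(1−c)/η, 2/(n(L+μ))} with η = L(nσμ + L√n φ)((1+c)rφ + (1−c)r + (1−τ)√n φ), and strict inequality holds in the first three bounds, then det(I − M(α)) > 0 and all diagonal entries of M(α) are less than 1, hence the spectral radius of M(α) is less than 1. -/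
import Mathlib

open Matrix in
lemma aux_spec_lt_one (M : Matrix (Fin 3) (Fin 3) ℝ) (hpos : ∀ i j, 0 ≤ M i j)
    (v : Fin 3 → ℝ) (hv : ∀ i, 0 < v i) (hMv : ∀ i, ∑ j, M i j * v j < v i) :
    ∀ z ∈ spectrum ℂ (M.map (algebraMap ℝ ℂ)), ‖z‖ < 1 := by
  intro z hz
  set A : Matrix (Fin 3) (Fin 3) ℂ := M.map (algebraMap ℝ ℂ) with hA
  rw [spectrum.mem_iff] at hz
  have hdet : (algebraMap ℂ (Matrix (Fin 3) (Fin 3) ℂ) z - A).det = 0 := by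
    by_contra h
    exact hz ((Matrix.isUnit_iff_isUnit_det _).mpr (Ne.isUnit h))
  obtain ⟨x, hx0, hx⟩ := (Matrix.exists_mulVec_eq_zero_iff).mpr hdet
  have hxz : ∀ i, z * x i = ∑ j, (M i j : ℂ) * x j := by
    intro i
    have h1 : (algebraMap ℂ (Matrix (Fin 3) (Fin 3) ℂ) z - A).mulVec x i = 0 := by
      rw [hx]; rfl
    rw [Matrix.sub_mulVec] at h1
    have h2 : (algebraMap ℂ (Matrix (Fin 3) (Fin 3) ℂ) z).mulVec x = z • x := by
      rw [Algebra.algebraMap_eq_smul_one, Matrix.smul_mulVec, Matrix.one_mulVec]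
    rw [h2] at h1
    simp only [Pi.sub_apply, Pi.smul_apply, smul_eq_mul, sub_eq_zero] at h1
    rw [h1]
    simp [Matrix.mulVec, dotProduct, hA, Matrix.map_apply]
  obtain ⟨i, hi⟩ := Finite.exists_max (fun j => ‖x j‖ / v j)
  have hratio : 0 < ‖x i‖ / v i := by
    obtain ⟨j, hj⟩ := Function.ne_iff.mp hx0
    exact lt_of_lt_of_le (div_pos (norm_pos_iff.mpr hj) (hv j)) (hi j)
  have hxi : 0 < ‖x i‖ := by
    have := mul_pos hratio (hv i)
    rwa [div_mul_cancel₀ _ (hv i).ne'] at this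
  have key : ‖z‖ * ‖x i‖ < 1 * ‖x i‖ := by
    rw [one_mul, ← norm_mul, hxz i]
    calc ‖∑ j, (M i j : ℂ) * x j‖ ≤ ∑ j, ‖(M i j : ℂ) * x j‖ := norm_sum_le _ _
      _ = ∑ j, M i j * ‖x j‖ := by
          refine Finset.sum_congr rfl fun j _ => ?_
          rw [norm_mul, Complex.norm_real, Real.norm_eq_abs, abs_of_nonneg (hpos i j)]
      _ ≤ ∑ j, M i j * (‖x i‖ / v i * v j) := by
          refine Finset.sum_le_sum fun j _ => ?_
          exact mul_le_mul_of_nonneg_left ((div_le_iff₀ (hv j)).mp (hi j)) (hpos i j)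
      _ = ‖x i‖ / v i * ∑ j, M i j * v j := by
          rw [Finset.mul_sum]; exact Finset.sum_congr rfl fun j _ => by ring
      _ < ‖x i‖ / v i * v i := mul_lt_mul_of_pos_left (hMv i) hratio
      _ = ‖x i‖ := div_mul_cancel₀ _ (hv i).ne'
  exact lt_of_mul_lt_mul_right key (norm_nonneg _)

set_option maxHeartbeats 1000000 in
theorem stmt_17 (n : ℕ) (hn : 0 < n) (σ μ L r φ c τ α : ℝ)
    (hσ : 0 < σ) (hσn : σ ≤ 1 / n) (hμ : 0 < μ) (hμL : μ ≤ L)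
    (hr : 1 ≤ r) (hφ : 1 ≤ φ)
    (hc : c ∈ Set.Ioo (0 : ℝ) 1) (hτ : τ ∈ Set.Ioo (0 : ℝ) 1)
    (hα0 : 0 < α)
    (hα1 : α < (1 - c) / (L * Real.sqrt n * φ))
    (hα2 : α < (1 - τ) / (L * r))
    (hα3 : α < n * σ * μ * (1 - τ) * (1 - c) /
      (L * (n * σ * μ + L * Real.sqrt n * φ) *
        ((1 + c) * r * φ + (1 - c) * r + (1 - τ) * Real.sqrt n * φ)))
    (hα4 : α ≤ 2 / (n * (L + μ)))
    (M : Matrix (Fin 3) (Fin 3) ℝ)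
    (hM : M = !![1 - α * n * σ * μ, α * L * Real.sqrt n * φ, α;
                 α * L * Real.sqrt n * φ, c + α * L * Real.sqrt n * φ, α;
                 α * L ^ 2 * r * Real.sqrt n * φ,
                   L * r * (1 + c) * φ + α * L ^ 2 * r * Real.sqrt n * φ, τ + α * L * r]) :
    0 < (1 - M).det ∧ (∀ i, M i i < 1) ∧
      ∀ z ∈ spectrum ℂ (M.map (algebraMap ℝ ℂ)), ‖z‖ < 1 := by
  subst hM
  obtain ⟨hc0, hc1⟩ := hc
  obtain ⟨hτ0, hτ1⟩ := hτ
  have hL : 0 < L := lt_of_lt_of_le hμ hμL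
  have hr0 : 0 < r := lt_of_lt_of_le one_pos hr
  have hφ0 : 0 < φ := lt_of_lt_of_le one_pos hφ
  have hn0 : (0:ℝ) < n := by exact_mod_cast hn
  have hn1 : (1:ℝ) ≤ n := by exact_mod_cast hn
  set s := Real.sqrt n with hs
  have hs0 : 0 < s := Real.sqrt_pos.mpr hn0
  have hApos : 0 < (n:ℝ) * σ * μ := by positivity
  have hBpos : 0 < L * s * φ := by positivity
  have hP1 : 0 < (1 + c) * r * φ := by positivity
  have hP2 : 0 < (1 - c) * r := mul_pos (by linarith) hr0
  have hP3 : 0 < (1 - τ) * s * φ := mul_pos (mul_pos (by linarith) hs0) hφ0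
  have hηpos : 0 < L * ((n:ℝ) * σ * μ + L * s * φ) *
      ((1 + c) * r * φ + (1 - c) * r + (1 - τ) * s * φ) :=
    mul_pos (mul_pos hL (by linarith)) (by linarith)
  have hαη : α * (L * ((n:ℝ) * σ * μ + L * s * φ) *
      ((1 + c) * r * φ + (1 - c) * r + (1 - τ) * s * φ)) <
      (n:ℝ) * σ * μ * (1 - τ) * (1 - c) := (lt_div_iff₀ hηpos).mp hα3
  have hb : α * (L * s * φ) < 1 - c := (lt_div_iff₀ hBpos).mp hα1
  have hlr : α * (L * r) < 1 - τ := (lt_div_iff₀ (mul_pos hL hr0)).mp hα2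
  have hμα : α * ((n:ℝ) * σ * μ) ≤ 1 := by
    have h1 : (n:ℝ) * σ ≤ 1 := by rw [le_div_iff₀ hn0] at hσn; linarith
    have h2 : α * ((n:ℝ) * (L + μ)) ≤ 2 := by
      rw [le_div_iff₀ (by positivity : (0:ℝ) < n * (L + μ))] at hα4; linarith
    have h3 : 0 ≤ (1 - (n:ℝ) * σ) * (α * μ) :=
      mul_nonneg (by linarith) (by positivity)
    have h4 : 0 ≤ ((n:ℝ) - 1) * (α * (L + μ)) :=
      mul_nonneg (by linarith) (by positivity)
    have h5 : 0 ≤ α * (L - μ) := mul_nonneg hα0.le (by linarith)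
    nlinarith [h3, h4, h5, h2]
  -- the determinant value
  have hΔ : 0 < α * ((n:ℝ) * σ * μ * (1 - τ) * (1 - c) -
      α * (L * ((n:ℝ) * σ * μ + L * s * φ) *
        ((1 + c) * r * φ + (1 - c) * r + (1 - τ) * s * φ))) :=
    mul_pos hα0 (by linarith)
  have hdet : (1 - !![1 - α * n * σ * μ, α * L * s * φ, α;
                 α * L * s * φ, c + α * L * s * φ, α;
                 α * L ^ 2 * r * s * φ,
                   L * r * (1 + c) * φ + α * L ^ 2 * r * s * φ, τ + α * L * r]).det =
      α * ((n:ℝ) * σ * μ * (1 - τ) * (1 - c) -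
        α * (L * ((n:ℝ) * σ * μ + L * s * φ) *
          ((1 + c) * r * φ + (1 - c) * r + (1 - τ) * s * φ))) := by
    simp [Matrix.det_fin_three, Matrix.sub_apply, Matrix.one_apply]
    ring
  refine ⟨by rw [hdet]; exact hΔ, ?_, ?_⟩
  · intro i
    fin_cases i <;>
      simp [Matrix.cons_val_zero, Matrix.cons_val_one, Matrix.head_cons] <;>
      nlinarith
  · -- spectral radius part
    have ht0 : 0 < 1 - τ - α * (L * r) := by linarith
    have hau : 0 ≤ α * ((n:ℝ) * σ * μ) * (1 - c - α * (L * s * φ)) - (α * (L * s * φ)) ^ 2 := by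
      have h1 : (1 - τ) * (α * ((L * s * φ) * ((n:ℝ) * σ * μ + L * s * φ))) ≤
          α * (L * ((n:ℝ) * σ * μ + L * s * φ) *
            ((1 + c) * r * φ + (1 - c) * r + (1 - τ) * s * φ)) := by
        have h2 : 0 ≤ α * (L * ((n:ℝ) * σ * μ + L * s * φ)) *
            ((1 + c) * r * φ + (1 - c) * r) := by
          have h3 : (0:ℝ) ≤ (1 + c) * r * φ + (1 - c) * r := by linarith
          have h4 : 0 ≤ α * (L * ((n:ℝ) * σ * μ + L * s * φ)) := by positivity
          exact mul_nonneg h4 h3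
        linarith [h2]
      have h2 : α * ((L * s * φ) * ((n:ℝ) * σ * μ + L * s * φ)) ≤
          (n:ℝ) * σ * μ * (1 - c) := by
        have h6 : (1 - τ) * (α * ((L * s * φ) * ((n:ℝ) * σ * μ + L * s * φ))) <
            (1 - τ) * ((n:ℝ) * σ * μ * (1 - c)) := by linarith [h1.trans_lt hαη]
        exact le_of_lt ((mul_lt_mul_iff_right₀ (by linarith : (0:ℝ) < 1 - τ)).mp h6)
      have h7 : 0 ≤ α * ((n:ℝ) * σ * μ * (1 - c) -
          α * ((L * s * φ) * ((n:ℝ) * σ * μ + L * s * φ))) :=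
        mul_nonneg hα0.le (by linarith)
      linarith [h7]
    have hv0 : 0 < ((1 - τ - α * (L * r)) + α) * (1 - c) :=
      mul_pos (by linarith) (by linarith)
    have hv1 : 0 < (α * ((n:ℝ) * σ * μ) + α * (L * s * φ)) * ((1 - τ - α * (L * r)) + α) :=
      mul_pos (by positivity) (by linarith)
    have hv2 : 0 < (α * ((n:ℝ) * σ * μ) * (1 - c - α * (L * s * φ)) - (α * (L * s * φ)) ^ 2)
        + (α * ((n:ℝ) * σ * μ) + α * (L * s * φ)) * ((L * r * (1 + c) * φ) + (α * L ^ 2 * r * s * φ))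
        + (α * L ^ 2 * r * s * φ) * (1 - c) := by
      have h1 : 0 < (α * ((n:ℝ) * σ * μ) + α * (L * s * φ)) *
          ((L * r * (1 + c) * φ) + (α * L ^ 2 * r * s * φ)) := by positivity
      have h2 : 0 < (α * L ^ 2 * r * s * φ) * (1 - c) :=
        mul_pos (by positivity) (by linarith)
      linarith
    apply aux_spec_lt_one _ ?_
      ![((1 - τ - α * (L * r)) + α) * (1 - c),
        (α * ((n:ℝ) * σ * μ) + α * (L * s * φ)) * ((1 - τ - α * (L * r)) + α),
        (α * ((n:ℝ) * σ * μ) * (1 - c - α * (L * s * φ)) - (α * (L * s * φ)) ^ 2)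
          + (α * ((n:ℝ) * σ * μ) + α * (L * s * φ)) * ((L * r * (1 + c) * φ) + (α * L ^ 2 * r * s * φ))
          + (α * L ^ 2 * r * s * φ) * (1 - c)] ?_ ?_
    · intro i j
      have hg0 : (0:ℝ) ≤ α * L ^ 2 * r * s * φ := by positivity
      have hB0 : (0:ℝ) ≤ α * L * s * φ := by positivity
      have hh0 : (0:ℝ) ≤ L * r * (1 + c) * φ := by positivity
      have hlr0 : (0:ℝ) ≤ α * L * r := by positivity
      fin_cases i <;> fin_cases j <;>
        simp [Matrix.cons_val_zero, Matrix.cons_val_one, Matrix.head_cons] <;>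
        linarith [hμα]
    · intro i
      fin_cases i <;>
        simp [Matrix.cons_val_zero, Matrix.cons_val_one, Matrix.head_cons] <;>
        linarith [hv0, hv1, hv2]
    · intro i
      fin_cases i <;>
        simp [Fin.sum_univ_three, Matrix.cons_val_zero, Matrix.cons_val_one, Matrix.head_cons] <;>
        linarith [hΔ]
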